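/- Let H be a real Hilbert space, Z ⊆ H nonempty, and (x_n) ⊆ H a bounded sequence such that ‖x_n − z‖ converges for every z ∈ Z. If every weak cluster point of (x_n) lies in Z, then (x_n) converges weakly to some point of Z. -/

import Mathlib

open Filter

section Aux

variable {H : Type*} [NormedAddCommGroup H] [InnerProductSpace ℝ H] [CompleteSpace H]

/-- Any bounded sequence in a Hilbert space has a weakly convergent subsequence. -/
lemma aux_weak_subseq (x : ℕ → H) (C : ℝ) (hC : ∀ n, ‖x n‖ ≤ C) :
    ∃ p : H, ∃ φ : ℕ → ℕ, StrictMono φ ∧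
      ∀ y : H, Tendsto (fun k => (inner ℝ (x (φ k)) y : ℝ)) atTop (nhds (inner ℝ p y : ℝ)) := by
  have hC0 : (0 : ℝ) ≤ C := le_trans (norm_nonneg _) (hC 0)
  -- Step 1: extract a subsequence along which all inner ℝ products with the `x i` converge
  set K : Set (ℕ → ℝ) := Set.pi Set.univ (fun i => Metric.closedBall 0 (C * ‖x i‖)) with hKdef
  have hK : IsCompact K := isCompact_univ_pi fun i => isCompact_closedBall _ _
  have hmem : ∀ n, (fun i => (inner ℝ (x n) (x i) : ℝ)) ∈ K := by
    intro n i _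
    rw [Metric.mem_closedBall, Real.dist_eq, sub_zero]
    calc |(inner ℝ (x n) (x i) : ℝ)| ≤ ‖x n‖ * ‖x i‖ := abs_real_inner_le_norm _ _
      _ ≤ C * ‖x i‖ := mul_le_mul_of_nonneg_right (hC n) (norm_nonneg _)
  obtain ⟨a, -, φ, hφ, ha⟩ := hK.tendsto_subseq hmem
  have hai : ∀ i, Tendsto (fun k => (inner ℝ (x (φ k)) (x i) : ℝ)) atTop (nhds (a i)) := by
    intro i
    exact (tendsto_pi_nhds.1 ha) i
  -- Step 2: the inner ℝ products converge against any vector in the span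
  set M := (Submodule.span ℝ (Set.range x)).topologicalClosure with hMdef
  have hxM : ∀ n, x n ∈ M := fun n =>
    Submodule.le_topologicalClosure _ (Submodule.subset_span (Set.mem_range_self n))
  have hspan : ∀ y ∈ Submodule.span ℝ (Set.range x),
      ∃ l : ℝ, Tendsto (fun k => (inner ℝ (x (φ k)) y : ℝ)) atTop (nhds l) := by
    intro y hy
    induction hy using Submodule.span_induction with
    | mem y hy =>
        obtain ⟨i, rfl⟩ := hy
        exact ⟨a i, hai i⟩
    | zero => exact ⟨0, by simpa using (tendsto_const_nhds : Tendsto (fun _ : ℕ => (0:ℝ)) atTop _)⟩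
    | add y z _ _ hy hz =>
        obtain ⟨l1, h1⟩ := hy
        obtain ⟨l2, h2⟩ := hz
        exact ⟨l1 + l2, by simpa [inner_add_right] using h1.add h2⟩
    | smul c y _ hy =>
        obtain ⟨l, h⟩ := hy
        exact ⟨c * l, by simpa [real_inner_smul_right] using h.const_mul c⟩
  -- Step 3: the inner ℝ products converge against any vector in the closure of the span
  have hclos : ∀ y ∈ M, ∃ l : ℝ, Tendsto (fun k => (inner ℝ (x (φ k)) y : ℝ)) atTop (nhds l) := by
    intro y hy
    have hcauchy : CauchySeq (fun k => (inner ℝ (x (φ k)) y : ℝ)) := by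
      rw [Metric.cauchySeq_iff]
      intro ε hε
      have hyc : y ∈ closure ((Submodule.span ℝ (Set.range x) : Submodule ℝ H) : Set H) := hy
      rw [Metric.mem_closure_iff] at hyc
      obtain ⟨w, hw, hwy⟩ := hyc (ε / (3 * (C + 1))) (by positivity)
      rw [dist_eq_norm] at hwy
      obtain ⟨l, hl⟩ := hspan w hw
      have hcw := hl.cauchySeq
      rw [Metric.cauchySeq_iff] at hcw
      obtain ⟨N, hN⟩ := hcw (ε / 3) (by positivity)
      refine ⟨N, fun m hm n hn => ?_⟩
      have key : ∀ j, |(inner ℝ (x (φ j)) y : ℝ) - (inner ℝ (x (φ j)) w : ℝ)| ≤ C * ‖y - w‖ := by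
        intro j
        calc |(inner ℝ (x (φ j)) y : ℝ) - (inner ℝ (x (φ j)) w : ℝ)|
            = |(inner ℝ (x (φ j)) (y - w) : ℝ)| := by rw [inner_sub_right]
          _ ≤ ‖x (φ j)‖ * ‖y - w‖ := abs_real_inner_le_norm _ _
          _ ≤ C * ‖y - w‖ := mul_le_mul_of_nonneg_right (hC _) (norm_nonneg _)
      have hCw : C * ‖y - w‖ < ε / 3 := by
        calc C * ‖y - w‖ ≤ (C + 1) * ‖y - w‖ :=
              mul_le_mul_of_nonneg_right (by linarith) (norm_nonneg _)
          _ < (C + 1) * (ε / (3 * (C + 1))) := by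
              apply mul_lt_mul_of_pos_left hwy (by linarith)
          _ = ε / 3 := by field_simp
      have h1 := key m
      have h2 := key n
      have h3 := hN m hm n hn
      rw [Real.dist_eq] at h3 ⊢
      have : |(inner ℝ (x (φ m)) y : ℝ) - (inner ℝ (x (φ n)) y : ℝ)|
          ≤ |(inner ℝ (x (φ m)) y : ℝ) - (inner ℝ (x (φ m)) w : ℝ)|
            + |(inner ℝ (x (φ m)) w : ℝ) - (inner ℝ (x (φ n)) w : ℝ)|
            + |(inner ℝ (x (φ n)) w : ℝ) - (inner ℝ (x (φ n)) y : ℝ)| :=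
        (abs_sub_le _ (inner ℝ (x (φ m)) w : ℝ) _).trans (by
          have := abs_sub_le ((inner ℝ (x (φ m)) w : ℝ)) ((inner ℝ (x (φ n)) w : ℝ))
            ((inner ℝ (x (φ n)) y : ℝ))
          linarith)
      have h2' : |(inner ℝ (x (φ n)) w : ℝ) - (inner ℝ (x (φ n)) y : ℝ)| ≤ C * ‖y - w‖ := by
        rw [abs_sub_comm]; exact h2
      linarith
    exact cauchySeq_tendsto_of_complete hcauchy
  -- Step 4: the inner ℝ products converge against any vector, via orthogonal projection
  haveI : CompleteSpace M := (Submodule.isClosed_topologicalClosure _).completeSpace_coe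
  have hall : ∀ y : H, ∃ l : ℝ, Tendsto (fun k => (inner ℝ (x (φ k)) y : ℝ)) atTop (nhds l) := by
    intro y
    obtain ⟨l, hl⟩ := hclos ((M.orthogonalProjectionOnto y : M) : H) (SetLike.coe_mem _)
    refine ⟨l, ?_⟩
    have key : ∀ n, (inner ℝ (x n) y : ℝ) = (inner ℝ (x n) ((M.orthogonalProjectionOnto y : M) : H) : ℝ) := by
      intro n
      have h1 : y - ((M.orthogonalProjectionOnto y : M) : H) ∈ Mᗮ :=
        M.sub_starProjection_mem_orthogonal y
      have h2 : (inner ℝ (x n) (y - ((M.orthogonalProjectionOnto y : M) : H)) : ℝ) = 0 :=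
        (Submodule.mem_orthogonal M _).1 h1 (x n) (hxM n)
      rw [inner_sub_right] at h2
      linarith
    simpa only [← key] using hl
  -- Step 5: build the limit functional and use Riesz representation
  choose l hl using hall
  have hadd : ∀ y z : H, l (y + z) = l y + l z := fun y z =>
    tendsto_nhds_unique (hl (y + z)) (by simpa [inner_add_right] using (hl y).add (hl z))
  have hsmul : ∀ (c : ℝ) (y : H), l (c • y) = c * l y := fun c y =>
    tendsto_nhds_unique (hl (c • y)) (by simpa [real_inner_smul_right] using (hl y).const_mul c)
  have hbound : ∀ y : H, ‖l y‖ ≤ C * ‖y‖ := by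
    intro y
    refine le_of_tendsto (hl y).norm (Eventually.of_forall fun k => ?_)
    calc ‖(inner ℝ (x (φ k)) y : ℝ)‖ ≤ ‖x (φ k)‖ * ‖y‖ := norm_inner_le_norm _ _
      _ ≤ C * ‖y‖ := mul_le_mul_of_nonneg_right (hC _) (norm_nonneg _)
  let F₀ : H →ₗ[ℝ] ℝ :=
    { toFun := l
      map_add' := hadd
      map_smul' := fun c y => by simpa using hsmul c y }
  let F : H →L[ℝ] ℝ := LinearMap.mkContinuous F₀ C hbound
  refine ⟨(InnerProductSpace.toDual ℝ H).symm F, φ, hφ, fun y => ?_⟩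
  have : (inner ℝ ((InnerProductSpace.toDual ℝ H).symm F) y : ℝ) = F y :=
    InnerProductSpace.toDual_symm_apply
  rw [this]
  exact hl y

/-- Uniqueness of weak subsequential limits for sequences with converging distances. -/
lemma aux_uniq (x : ℕ → H) {p q : H}
    (hp : ∃ A : ℝ, Tendsto (fun n => ‖x n - p‖) atTop (nhds A))
    (hq : ∃ B : ℝ, Tendsto (fun n => ‖x n - q‖) atTop (nhds B))
    {φ ψ : ℕ → ℕ} (hφ : Tendsto φ atTop atTop) (hψ : Tendsto ψ atTop atTop)
    (hwp : ∀ y : H, Tendsto (fun k => (inner ℝ (x (φ k)) y : ℝ)) atTop (nhds (inner ℝ p y : ℝ)))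
    (hwq : ∀ y : H, Tendsto (fun k => (inner ℝ (x (ψ k)) y : ℝ)) atTop (nhds (inner ℝ q y : ℝ))) :
    p = q := by
  obtain ⟨A, hA⟩ := hp
  obtain ⟨B, hB⟩ := hq
  set t : ℕ → ℝ := fun n => (inner ℝ (x n) (p - q) : ℝ) with ht
  have hexp : ∀ n, t n = ((‖x n - q‖ ^ 2 - ‖x n - p‖ ^ 2) - ‖q‖ ^ 2 + ‖p‖ ^ 2) / 2 := by
    intro n
    have e1 : ‖x n - q‖ ^ 2 = ‖x n‖ ^ 2 - 2 * (inner ℝ (x n) q : ℝ) + ‖q‖ ^ 2 :=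
      norm_sub_sq_real _ _
    have e2 : ‖x n - p‖ ^ 2 = ‖x n‖ ^ 2 - 2 * (inner ℝ (x n) p : ℝ) + ‖p‖ ^ 2 :=
      norm_sub_sq_real _ _
    have e3 : t n = (inner ℝ (x n) p : ℝ) - (inner ℝ (x n) q : ℝ) := inner_sub_right _ _ _
    rw [e3, e1, e2]; ring
  set c : ℝ := ((B ^ 2 - A ^ 2) - ‖q‖ ^ 2 + ‖p‖ ^ 2) / 2 with hc
  have htc : Tendsto t atTop (nhds c) := by
    have : Tendsto (fun n => ((‖x n - q‖ ^ 2 - ‖x n - p‖ ^ 2) - ‖q‖ ^ 2 + ‖p‖ ^ 2) / 2)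
        atTop (nhds c) := by
      apply Tendsto.div_const
      apply Tendsto.add_const
      apply Tendsto.sub_const
      exact ((hB.pow 2).sub (hA.pow 2))
    simpa only [← hexp] using this
  have hcp : (inner ℝ p (p - q) : ℝ) = c :=
    tendsto_nhds_unique (hwp (p - q)) (htc.comp hφ)
  have hcq : (inner ℝ q (p - q) : ℝ) = c :=
    tendsto_nhds_unique (hwq (p - q)) (htc.comp hψ)
  have : (inner ℝ (p - q) (p - q) : ℝ) = 0 := by
    rw [inner_sub_left, hcp, hcq, sub_self]
  have hpq : p - q = 0 := inner_self_eq_zero.1 this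
  exact sub_eq_zero.1 hpq

end Aux

theorem stmt_5 {H : Type*} [NormedAddCommGroup H] [InnerProductSpace ℝ H] [CompleteSpace H]
    (Z : Set H) (hZ : Z.Nonempty) (x : ℕ → H)
    (hbdd : ∃ C : ℝ, ∀ n, ‖x n‖ ≤ C)
    (hconv : ∀ z ∈ Z, ∃ l : ℝ, Tendsto (fun n => ‖x n - z‖) atTop (nhds l))
    (hclus : ∀ p : H,
      (∃ φ : ℕ → ℕ, StrictMono φ ∧
        ∀ y : H, Tendsto (fun k => (inner ℝ (x (φ k)) y : ℝ)) atTop (nhds (inner ℝ p y : ℝ)))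
      → p ∈ Z) :
    ∃ p ∈ Z, ∀ y : H, Tendsto (fun n => (inner ℝ (x n) y : ℝ)) atTop (nhds (inner ℝ p y : ℝ)) := by
  obtain ⟨C, hC⟩ := hbdd
  obtain ⟨p, φ, hφ, hp⟩ := aux_weak_subseq x C hC
  have hpZ : p ∈ Z := hclus p ⟨φ, hφ, hp⟩
  refine ⟨p, hpZ, fun y => ?_⟩
  apply tendsto_of_subseq_tendsto
  intro ns hns
  obtain ⟨ms, hms, hcomp⟩ := strictMono_subseq_of_tendsto_atTop hns
  obtain ⟨q, ψ, hψ, hq⟩ := aux_weak_subseq (fun k => x (ns (ms k))) C (fun k => hC _)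
  have hq' : ∀ y : H, Tendsto (fun k => (inner ℝ (x ((ns ∘ ms) (ψ k))) y : ℝ)) atTop
      (nhds (inner ℝ q y : ℝ)) := hq
  have hqZ : q ∈ Z := hclus q ⟨(ns ∘ ms) ∘ ψ, hcomp.comp hψ, fun y => hq' y⟩
  have hpq : p = q :=
    aux_uniq x (hconv p hpZ) (hconv q hqZ) hφ.tendsto_atTop
      (((hcomp.comp hψ).tendsto_atTop)) hp (fun y => hq' y)
  refine ⟨ms ∘ ψ, ?_⟩
  rw [hpq]
  exact hq y
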